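/- (Isosceles projective triangle) Suppose U, V, W are nonzero vectors with a_U, a_V, a_W all nonzero, with all three quantities a_U·a_V − b_{UV}², a_U·a_W − b_{UW}², a_V·a_W − b_{VW}² nonzero, whose projective triangle has projective quadrances q_u = q_v = q ≠ 0 and q_w ≠ 0 and projective spreads S_u = S_v = S and S_w, and suppose 1 − S·q ≠ 0. Then q_w = 4q(1 − S)(1 − q)/(1 − S·q)² and S_w = 4S(1 − S)(1 − q)/(1 − S·q)². -/

import Mathlib

/-- The projective quadrance between the projective points `[U]` and `[V]`. -/
def projQuadrance {F : Type*} [Field F] {M : Type*} [AddCommGroup M] [Module F M]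
    (B : LinearMap.BilinForm F M) (U V : M) : F :=
  1 - (B U V) ^ 2 / (B U U * B V V)

/-- The projective spread between the projective lines `WU` and `WV`
(the spread at the vertex `[W]`). -/
def projSpread {F : Type*} [Field F] {M : Type*} [AddCommGroup M] [Module F M]
    (B : LinearMap.BilinForm F M) (W U V : M) : F :=
  1 - (B W W * B U V - B U W * B V W) ^ 2 /
      ((B U U * B W W - (B U W) ^ 2) * (B V V * B W W - (B V W) ^ 2))

/-- The key algebraic identity behind the isosceles projective triangle theorem. -/
lemma key_alg {F : Type*} [Field F]
    (a b c x y z q S : F)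
    (ha : a ≠ 0) (hb : b ≠ 0) (hc : c ≠ 0)
    (hab : a*b - x^2 ≠ 0) (hac : a*c - y^2 ≠ 0) (hbc : b*c - z^2 ≠ 0)
    (hz2 : z^2 = b*c*(1-q)) (hy2 : y^2 = a*c*(1-q))
    (hSu : (a*z - x*y)^2 = (1-S)*((a*b - x^2)*(a*c - y^2)))
    (hSq : 1 - S*q ≠ 0) :
    1 - x^2/(a*b) = 4*q*(1-S)*(1-q)/(1 - S*q)^2 ∧
    1 - (c*x - y*z)^2/((a*c - y^2)*(b*c - z^2)) = 4*S*(1-S)*(1-q)/(1 - S*q)^2 := by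
  have hE0 : a * (2*(x*y*z)) = a * (c*(a*b*(1-2*q+q*S) + x^2*(1-q*S))) := by
    linear_combination a^2*hz2 + (x^2 + (1-S)*(a*b-x^2))*hy2 - hSu
  have hEc : 2*(x*y*z) = c*(a*b*(1-2*q+q*S) + x^2*(1-q*S)) := mul_left_cancel₀ ha hE0
  have hacne : a^2*c^2 ≠ 0 := mul_ne_zero (pow_ne_zero 2 ha) (pow_ne_zero 2 hc)
  have hsq0 : (a^2*c^2) * ((a*b*(1-2*q+q*S) + x^2*(1-q*S))^2)
      = (a^2*c^2) * (4*x^2*(a*b)*(1-q)^2) := by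
    linear_combination 4*a^2*x^2*y^2*hz2 + 4*a^2*x^2*(b*c*(1-q))*hy2
      - (2*a*(x*y*z) + a*c*(a*b*(1-2*q+q*S) + x^2*(1-q*S)))*hE0
  have hsq := mul_left_cancel₀ hacne hsq0
  have hfac : (a*b - x^2) * (a*b*(1-2*q+q*S)^2 - x^2*(1-q*S)^2) = 0 := by
    linear_combination hsq
  have hkey : x^2*(1-q*S)^2 = a*b*(1-2*q+q*S)^2 := by
    have h := (mul_eq_zero.mp hfac).resolve_left hab
    linear_combination -h
  constructor
  · have habne : a*b ≠ 0 := mul_ne_zero ha hb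
    have hSq' : 1 - q*S ≠ 0 := by rwa [mul_comm S q] at hSq
    field_simp
    linear_combination (-1 : F)*hkey
  · have hmain : (1-S*q)^2 * ((a*c-y^2)*(b*c-z^2) - (c*x-y*z)^2)
        = 4*S*(1-S)*(1-q)*((a*c-y^2)*(b*c-z^2)) := by
      linear_combination ((1-S*q)^2 - 4*S*(1-S)*(1-q)) *
          ((-(a*c*q)) * hz2 + (-(b*c*q)) * hy2 + (y^2 - a*c*(1-q)) * hz2)
        - q*S*c^2 * hkey - (1-S*q)^2*(y^2*hz2 + b*c*(1-q)*hy2) + (1-S*q)^2*c*hEc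
    have hd : (a*c - y^2)*(b*c - z^2) ≠ 0 := mul_ne_zero hac hbc
    have hac' : c*a - y^2 ≠ 0 := by rwa [mul_comm c a]
    have hbc' : c*b - z^2 ≠ 0 := by rwa [mul_comm c b]
    field_simp
    linear_combination hmain

theorem isosceles_projective_triangle
    {F : Type*} [Field F] (hchar : (2 : F) ≠ 0)
    {M : Type*} [AddCommGroup M] [Module F M]
    (B : LinearMap.BilinForm F M) (hsym : ∀ x y : M, B x y = B y x)
    (U V W : M) (hU : U ≠ 0) (hV : V ≠ 0) (hW : W ≠ 0)
    (haU : B U U ≠ 0) (haV : B V V ≠ 0) (haW : B W W ≠ 0)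
    (hdUV : B U U * B V V - (B U V) ^ 2 ≠ 0)
    (hdUW : B U U * B W W - (B U W) ^ 2 ≠ 0)
    (hdVW : B V V * B W W - (B V W) ^ 2 ≠ 0)
    (q S : F)
    (hqu : projQuadrance B V W = q) (hqv : projQuadrance B U W = q) (hq : q ≠ 0)
    (hqw : projQuadrance B U V ≠ 0)
    (hSu : projSpread B U V W = S) (hSv : projSpread B V U W = S)
    (hSq : 1 - S * q ≠ 0) :
    projQuadrance B U V = 4 * q * (1 - S) * (1 - q) / (1 - S * q) ^ 2 ∧
      projSpread B W U V = 4 * S * (1 - S) * (1 - q) / (1 - S * q) ^ 2 := by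
  simp only [projQuadrance, projSpread] at hqu hqv hqw hSu hSv ⊢
  rw [hsym V U, hsym W U] at hSu
  set a := B U U
  set b := B V V
  set c := B W W
  set x := B U V
  set y := B U W
  set z := B V W
  have hz2 : z^2 = b*c*(1-q) := by
    field_simp at hqu
    linear_combination -hqu
  have hy2 : y^2 = a*c*(1-q) := by
    field_simp at hqv
    linear_combination -hqv
  have hdUV' : b*a - x^2 ≠ 0 := by rwa [mul_comm] at hdUV
  have hdUW' : c*a - y^2 ≠ 0 := by rwa [mul_comm] at hdUW
  have hSu' : (a*z - x*y)^2 = (1-S)*((a*b - x^2)*(a*c - y^2)) := by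
    field_simp at hSu
    linear_combination -hSu
  exact key_alg a b c x y z q S haU haV haW hdUV hdUW hdVW hz2 hy2 hSu' hSq
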